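/- arXiv:1707.02084 — 4 statements merged into one kernel-verified Lean document; each statement's English description precedes it below -/
import Mathlib

section
/- Let g be a Lie algebra generated by its extremal elements, with symmetric associative extremal form g such that g_x = g(x,·) for each extremal x. If x, y are extremal elements with [x,y] ≠ 0 and z := [x,y] is extremal with [x,z] = 0 = [y,z] (case (d) of the two-generator classification), then the subalgebra generated by x and y is linearly spanned by extremal elements; more generally, if x and y do not commute then x, y, and exp(x,1)(y) = y + [x,y] + g_x(y)x linearly span the subalgebra ⟨x,y⟩ generated by x and y. -/
/-- An extremal element of a Lie algebra: a nonzero `x` admitting a linear functional `gx`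
with `[x,[x,y]] = 2gx(y)x` and satisfying the Premet identities. -/
def IsExtremal (F : Type*) {L : Type*} [Field F] [LieRing L] [LieAlgebra F L] (x : L) : Prop :=
  x ≠ 0 ∧ ∃ gx : L →ₗ[F] F,
    (∀ y : L, ⁅x, ⁅x, y⁆⁆ = (2 * gx y) • x) ∧
    (∀ y z : L, ⁅⁅x, y⁆, ⁅x, z⁆⁆ = gx ⁅y, z⁆ • x + gx z • ⁅x, y⁆ - gx y • ⁅x, z⁆) ∧
    (∀ y z : L, ⁅x, ⁅y, ⁅x, z⁆⁆⁆ = gx ⁅y, z⁆ • x - gx z • ⁅x, y⁆ - gx y • ⁅x, z⁆)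

/-- In case (d) of the two-generator classification (`z = [x,y] ≠ 0` extremal
and commuting with `x` and `y`), the subalgebra generated by the extremal elements `x` and
`y` is linearly spanned by extremal elements; more generally, since `x` and `y` do not
commute, `x`, `y` and `exp(x,1)(y) = y + [x,y] + g_x(y)x` linearly span `⟨x,y⟩`. -/
theorem subalgebra_spanned_by_extremal {F : Type*} [Field F] {L : Type*} [LieRing L]
    [LieAlgebra F L]
    (B : L →ₗ[F] L →ₗ[F] F)
    (hsymm : ∀ a b : L, B a b = B b a)
    (hassoc : ∀ a b c : L, B a ⁅b, c⁆ = B ⁅a, b⁆ c)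
    (x y : L) (hx : IsExtremal F x) (hy : IsExtremal F y)
    (hgx : ∀ u : L, ⁅x, ⁅x, u⁆⁆ = (2 * B x u) • x)
    (hgy : ∀ u : L, ⁅y, ⁅y, u⁆⁆ = (2 * B y u) • y)
    (hne : ⁅x, y⁆ ≠ 0)
    (hz : IsExtremal F ⁅x, y⁆)
    (hxz : ⁅x, ⁅x, y⁆⁆ = 0) (hyz : ⁅y, ⁅x, y⁆⁆ = 0) :
    (∃ S : Set L, (∀ s ∈ S, IsExtremal F s) ∧
      (LieSubalgebra.lieSpan F L {x, y} : Submodule F L) = Submodule.span F S) ∧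
    (LieSubalgebra.lieSpan F L {x, y} : Submodule F L)
      = Submodule.span F {x, y, y + ⁅x, y⁆ + B x y • x} := by
  set z := ⁅x, y⁆ with hzdef
  -- basic bracket facts among x, y, z
  have hxx : ⁅x, x⁆ = (0 : L) := lie_self x
  have hyy : ⁅y, y⁆ = (0 : L) := lie_self y
  have hyx : ⁅y, x⁆ = -z := by rw [← lie_skew, hzdef]
  have hzx : ⁅z, x⁆ = (0 : L) := by rw [← lie_skew, hxz, neg_zero]
  have hzy : ⁅z, y⁆ = (0 : L) := by rw [← lie_skew, hyz, neg_zero]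
  have hzz : ⁅z, z⁆ = (0 : L) := lie_self z
  -- membership of brackets of generators in the span
  have hgen : ∀ a ∈ ({x, y, z} : Set L), ∀ b ∈ ({x, y, z} : Set L),
      ⁅a, b⁆ ∈ Submodule.span F ({x, y, z} : Set L) := by
    intro a ha b hb
    have hxmem : x ∈ Submodule.span F ({x, y, z} : Set L) :=
      Submodule.subset_span (by simp)
    have hymem : y ∈ Submodule.span F ({x, y, z} : Set L) :=
      Submodule.subset_span (by simp)
    have hzmem : z ∈ Submodule.span F ({x, y, z} : Set L) :=
      Submodule.subset_span (by simp)
    rcases ha with rfl | rfl | rfl <;> rcases hb with rfl | rfl | rfl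
    · rw [hxx]; exact Submodule.zero_mem _
    · exact hzmem
    · rw [hxz]; exact Submodule.zero_mem _
    · rw [hyx]; exact Submodule.neg_mem _ hzmem
    · rw [hyy]; exact Submodule.zero_mem _
    · rw [hyz]; exact Submodule.zero_mem _
    · rw [hzx]; exact Submodule.zero_mem _
    · rw [hzy]; exact Submodule.zero_mem _
    · rw [hzz]; exact Submodule.zero_mem _
  -- the span is closed under brackets
  have hclosed : ∀ a ∈ Submodule.span F ({x, y, z} : Set L),
      ∀ b ∈ Submodule.span F ({x, y, z} : Set L),
      ⁅a, b⁆ ∈ Submodule.span F ({x, y, z} : Set L) := by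
    intro a ha b hb
    induction ha using Submodule.span_induction with
    | mem a' ha' =>
      induction hb using Submodule.span_induction with
      | mem b' hb' => exact hgen _ ha' _ hb'
      | zero => simp
      | add u v _ _ hu hv => rw [lie_add]; exact Submodule.add_mem _ hu hv
      | smul c u _ hu => rw [lie_smul]; exact Submodule.smul_mem _ _ hu
    | zero => simp
    | add u v _ _ hu hv => rw [add_lie]; exact Submodule.add_mem _ hu hv
    | smul c u _ hu => rw [smul_lie]; exact Submodule.smul_mem _ _ hu
  -- form the Lie subalgebra on this span
  let K : LieSubalgebra F L :=
    { toSubmodule := Submodule.span F ({x, y, z} : Set L)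
      lie_mem' := fun {a b} ha hb => hclosed a ha b hb }
  -- main equality
  have hmain : (LieSubalgebra.lieSpan F L {x, y} : Submodule F L)
      = Submodule.span F ({x, y, z} : Set L) := by
    apply le_antisymm
    · have : LieSubalgebra.lieSpan F L {x, y} ≤ K := by
        rw [LieSubalgebra.lieSpan_le]
        intro a ha
        rcases ha with rfl | rfl
        · exact Submodule.subset_span (by simp)
        · exact Submodule.subset_span (by simp)
      exact this
    · rw [Submodule.span_le]
      intro a ha
      have hxm : x ∈ LieSubalgebra.lieSpan F L {x, y} :=
        LieSubalgebra.subset_lieSpan (by simp)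
      have hym : y ∈ LieSubalgebra.lieSpan F L {x, y} :=
        LieSubalgebra.subset_lieSpan (by simp)
      rcases ha with rfl | rfl | rfl
      · exact hxm
      · exact hym
      · exact LieSubalgebra.lie_mem _ hxm hym
  constructor
  · exact ⟨{x, y, z}, by
      intro s hs
      rcases hs with rfl | rfl | rfl
      · exact hx
      · exact hy
      · exact hz, hmain⟩
  · rw [hmain]
    apply le_antisymm
    · rw [Submodule.span_le]
      intro a ha
      have hxm : x ∈ Submodule.span F ({x, y, y + z + B x y • x} : Set L) :=
        Submodule.subset_span (by simp)
      have hym : y ∈ Submodule.span F ({x, y, y + z + B x y • x} : Set L) :=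
        Submodule.subset_span (by simp)
      have hwm : y + z + B x y • x ∈
          Submodule.span F ({x, y, y + z + B x y • x} : Set L) :=
        Submodule.subset_span (by simp)
      rcases ha with rfl | rfl | rfl
      · exact hxm
      · exact hym
      · have hmem := Submodule.sub_mem _ (Submodule.sub_mem _ hwm hym)
          (Submodule.smul_mem _ (B x y) hxm)
        have heq : (y + z + B x y • x) - y - B x y • x = z := by abel
        rwa [heq] at hmem
    · rw [Submodule.span_le]
      intro a ha
      have hxm : x ∈ Submodule.span F ({x, y, z} : Set L) :=
        Submodule.subset_span (by simp)
      have hym : y ∈ Submodule.span F ({x, y, z} : Set L) :=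
        Submodule.subset_span (by simp)
      have hzm : z ∈ Submodule.span F ({x, y, z} : Set L) :=
        Submodule.subset_span (by simp)
      rcases ha with rfl | rfl | rfl
      · exact hxm
      · exact hym
      · exact Submodule.add_mem _ (Submodule.add_mem _ hym hzm)
          (Submodule.smul_mem _ _ hxm)
end

section
/- Let g be a Lie algebra over a field F with |F| > 3, generated by extremal elements, with extremal form g. Let x, y be extremal with g(x,y) = 1 and suppose [·,·]₁ is another Lie bracket on the same vector space with extremal form g₁, having the same set of extremal points. Write [x,y]₁ = αx + βy + γ[x,y] with γ ≠ 0. If for every λ ∈ F the element y + λ[x,y]₁ + λ²g₁(x,y)x is extremal for the original bracket (hence its coordinates (a,b,c) in the basis x, y, [x,y] satisfy ab = c²), then α = β = 0 and γ² = g₁(x,y); in particular [x,y]₁ = γ[x,y]. -/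
/-- Over a field with `|F| > 3`, let `x, y` be extremal with `g(x,y) = 1`,
let `b₁ = [x,y]₁ = αx + βy + γ[x,y]` (γ ≠ 0) be the value of a second bracket, and let
`g₁ = g₁(x,y)`. If for every `λ ∈ F` the element `y + λ[x,y]₁ + λ²g₁(x,y)x` is extremal
for the original bracket, i.e. its coordinates `(a,b,c)` in the basis `x, y, [x,y]`
satisfy `ab = c²`, then `α = β = 0`, `γ² = g₁(x,y)`, and `[x,y]₁ = γ[x,y]`. -/
theorem second_bracket_scalar_on_sl2 {F : Type*} [Field F] {L : Type*} [LieRing L]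
    [LieAlgebra F L]
    (hF : 3 < Nat.card F ∨ Infinite F)
    (x y : L) (hx : IsExtremal F x) (hy : IsExtremal F y)
    (B : L →ₗ[F] L →ₗ[F] F) (hBxy : B x y = 1)
    (hBext : ∀ u : L, ⁅x, ⁅x, u⁆⁆ = (2 * B x u) • x)
    (hli : LinearIndependent F ![x, y, ⁅x, y⁆])
    (b1 : L) (α β γ g1 : F)
    (hb1 : b1 = α • x + β • y + γ • ⁅x, y⁆) (hγ : γ ≠ 0)
    (hext : ∀ lam : F, ∃ a b c : F,
      y + lam • b1 + (lam ^ 2 * g1) • x = a • x + b • y + c • ⁅x, y⁆ ∧ a * b = c ^ 2) :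
    α = 0 ∧ β = 0 ∧ γ ^ 2 = g1 ∧ b1 = γ • ⁅x, y⁆ := by
  -- Step 1: for each lam, the coordinate identity
  have key : ∀ lam : F, (lam * α + lam ^ 2 * g1) * (1 + lam * β) = (lam * γ) ^ 2 := by
    intro lam
    obtain ⟨a, b, c, heq, habc⟩ := hext lam
    have h0 : ((lam * α + lam ^ 2 * g1) - a) • x + ((1 + lam * β) - b) • y
        + ((lam * γ) - c) • ⁅x, y⁆ = 0 := by
      have : (lam * α + lam ^ 2 * g1) • x + (1 + lam * β) • y + (lam * γ) • ⁅x, y⁆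
          = a • x + b • y + c • ⁅x, y⁆ := by
        rw [← heq, hb1]
        simp only [smul_add, smul_smul]
        module
      rw [sub_smul, sub_smul, sub_smul]
      rw [show ((lam * α + lam ^ 2 * g1) • x - a • x) + ((1 + lam * β) • y - b • y)
          + ((lam * γ) • ⁅x, y⁆ - c • ⁅x, y⁆)
          = ((lam * α + lam ^ 2 * g1) • x + (1 + lam * β) • y + (lam * γ) • ⁅x, y⁆)
            - (a • x + b • y + c • ⁅x, y⁆) by abel]
      rw [this, sub_self]
    have hli' := Fintype.linearIndependent_iff.mp hli
      ![((lam * α + lam ^ 2 * g1) - a), ((1 + lam * β) - b), ((lam * γ) - c)]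
    have hz : ∀ i, ![((lam * α + lam ^ 2 * g1) - a), ((1 + lam * β) - b), ((lam * γ) - c)] i = 0 := by
      apply hli'
      simpa [Fin.sum_univ_three] using h0
    have h1 := sub_eq_zero.mp (hz 0)
    have h2 := sub_eq_zero.mp (hz 1)
    have h3 := sub_eq_zero.mp (hz 2)
    rw [h1, h2, h3]
    exact habc
  -- Step 2: polynomial vanishing
  classical
  set p : Polynomial F := Polynomial.C α * Polynomial.X
      + Polynomial.C (g1 + α * β - γ ^ 2) * Polynomial.X ^ 2
      + Polynomial.C (g1 * β) * Polynomial.X ^ 3 with hp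
  have heval : ∀ lam : F, p.eval lam = 0 := by
    intro lam
    have := key lam
    simp only [hp, Polynomial.eval_add, Polynomial.eval_mul, Polynomial.eval_C,
      Polynomial.eval_X, Polynomial.eval_pow]
    linear_combination this
  have hdeg : p.natDegree ≤ 3 := by
    apply Polynomial.natDegree_add_le_of_degree_le
    · apply le_trans (Polynomial.natDegree_add_le _ _)
      simp only [max_le_iff]
      constructor
      · exact le_trans (Polynomial.natDegree_C_mul_le _ _) (by simp)
      · exact le_trans (Polynomial.natDegree_C_mul_le _ _) (by simp)
    · exact le_trans (Polynomial.natDegree_C_mul_le _ _) (by simp)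
  have hcard : (p.natDegree : Cardinal) < Cardinal.mk F := by
    rcases hF with h | h
    · have hfin : Finite F := Nat.finite_of_card_ne_zero (by omega)
      have := Fintype.ofFinite F
      rw [Cardinal.mk_fintype]
      have : Nat.card F = Fintype.card F := Nat.card_eq_fintype_card
      exact_mod_cast lt_of_le_of_lt (Nat.cast_le.mpr hdeg) (by omega)
    · exact lt_of_le_of_lt (Nat.cast_le.mpr hdeg)
        (lt_of_lt_of_le (Cardinal.nat_lt_aleph0 3) (Cardinal.aleph0_le_mk F))
  have hp0 : p = 0 := Polynomial.eq_zero_of_forall_eval_zero_of_natDegree_lt_card p heval hcard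
  have c1 : α = 0 := by
    have := congrArg (Polynomial.coeff · 1) hp0
    simp only [hp, Polynomial.coeff_add, Polynomial.coeff_C_mul, Polynomial.coeff_X_pow,
      Polynomial.coeff_X, Polynomial.coeff_zero] at this
    simpa using this
  have c3 : g1 * β = 0 := by
    have := congrArg (Polynomial.coeff · 3) hp0
    simp only [hp, Polynomial.coeff_add, Polynomial.coeff_C_mul, Polynomial.coeff_X_pow,
      Polynomial.coeff_X, Polynomial.coeff_zero] at this
    simpa using this
  have c2 : g1 + α * β - γ ^ 2 = 0 := by
    have := congrArg (Polynomial.coeff · 2) hp0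
    simp only [hp, Polynomial.coeff_add, Polynomial.coeff_C_mul, Polynomial.coeff_X_pow,
      Polynomial.coeff_X, Polynomial.coeff_zero] at this
    simpa using this
  have hg1 : γ ^ 2 = g1 := by linear_combination β * c1 - c2
  have hβ : β = 0 := by
    have : g1 ≠ 0 := by rw [← hg1]; exact pow_ne_zero 2 hγ
    rcases mul_eq_zero.mp c3 with h | h
    · exact absurd h this
    · exact h
  refine ⟨c1, hβ, hg1, ?_⟩
  rw [hb1, c1, hβ]
  simp
end

section
/- Let g be a Lie algebra, x an extremal element, and y₁, y₂, y₃ elements with y₁ + y₂ + y₃ = 0, [x,y₁] ≠ 0 ≠ [x,y₂], and suppose there exist scalars λ₁, λ₂, λ₃ ∈ F* and a second bracket [·,·]₁ with [x,y_i]₁ = λ_i[x,y_i] for i = 1,2,3, and with the property that [x,z] = 0 implies [x,z]₁ = 0 for z in the span of y₁,y₂. If λ₁ ≠ λ₂ then the element z := (λ₁−λ₃)y₁ + (λ₂−λ₃)y₂ is nonzero, satisfies [x,z] = 0 and [x,z]₁ = 0, and writing y₂ = μ₁y₁ + μ₂z yields [x,y₂]₁ = λ₁[x,y₂], a contradiction;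 hence λ₁ = λ₂. -/
/-- Scalar-matching lemma. Let `x, y₁, y₂, y₃` with `y₁ + y₂ + y₃ = 0`,
`[x,y₁] ≠ 0 ≠ [x,y₂]`, and let `b₁` be (the `[x,·]`-component of) a second bracket with
`b₁(y_i) = λ_i[x,y_i]` for nonzero scalars `λ_i`, such that `b₁` kills every element of
the span of `y₁, y₂` killed by `[x,·]`. Then `λ₁ = λ₂`. -/
theorem scalar_matching {F : Type*} [Field F] {L : Type*} [LieRing L] [LieAlgebra F L]
    (x y₁ y₂ y₃ : L) (b1 : L →ₗ[F] L)
    (hsum : y₁ + y₂ + y₃ = 0)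
    (h1 : ⁅x, y₁⁆ ≠ 0) (h2 : ⁅x, y₂⁆ ≠ 0)
    (hli : LinearIndependent F ![y₁, y₂])
    (lam₁ lam₂ lam₃ : F) (hl1 : lam₁ ≠ 0) (hl2 : lam₂ ≠ 0) (hl3 : lam₃ ≠ 0)
    (e1 : b1 y₁ = lam₁ • ⁅x, y₁⁆) (e2 : b1 y₂ = lam₂ • ⁅x, y₂⁆)
    (e3 : b1 y₃ = lam₃ • ⁅x, y₃⁆)
    (hkill : ∀ z ∈ Submodule.span F ({y₁, y₂} : Set L), ⁅x, z⁆ = 0 → b1 z = 0) :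
    lam₁ = lam₂ := by
  have hy3 : y₃ = -(y₁ + y₂) := eq_neg_of_add_eq_zero_right hsum
  subst hy3
  have h := e3
  simp only [map_neg, map_add, e1, e2, lie_neg, lie_add, smul_neg, smul_add] at h
  have key : (lam₁ - lam₃) • ⁅x, y₁⁆ = (lam₃ - lam₂) • ⁅x, y₂⁆ := by
    linear_combination (norm := module) -h
  -- the killed element
  have hmem : (lam₁ - lam₃) • y₁ + (lam₂ - lam₃) • y₂ ∈
      Submodule.span F ({y₁, y₂} : Set L) :=
    Submodule.add_mem _
      (Submodule.smul_mem _ _ (Submodule.subset_span (by simp)))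
      (Submodule.smul_mem _ _ (Submodule.subset_span (by simp)))
  have hlz : ⁅x, (lam₁ - lam₃) • y₁ + (lam₂ - lam₃) • y₂⁆ = 0 := by
    rw [lie_add, lie_smul, lie_smul]
    linear_combination (norm := module) key
  have hz0 := hkill _ hmem hlz
  rw [map_add, map_smul, map_smul, e1, e2] at hz0
  have final : ((lam₃ - lam₂) * (lam₁ - lam₂)) • ⁅x, y₂⁆ = 0 := by
    linear_combination (norm := module) hz0 - lam₁ • key
  rcases smul_eq_zero.mp final with hc | hb
  · rcases mul_eq_zero.mp hc with h32 | h12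
    · -- lam₃ = lam₂, use key
      have h32' : lam₃ = lam₂ := sub_eq_zero.mp h32
      have : (lam₁ - lam₃) • ⁅x, y₁⁆ = 0 := by
        rw [key, h32']; simp
      rcases smul_eq_zero.mp this with hc1 | hb1
      · have := sub_eq_zero.mp hc1
        rw [this, h32']
      · exact absurd hb1 h1
    · exact sub_eq_zero.mp h12
  · exact absurd hb h2
end

section
/- Let g be a Lie algebra over a field F of characteristic ≠ 2 generated by its extremal elements, with extremal form g. Let x be extremal and y₁, y₂ extremal elements spanning a line all of whose nonzero elements are extremal (so y₁ + y₂ is extremal or zero times scalars, i.e., (y₁,y₂) ∈ E_{−1}). Suppose a second Lie bracket [·,·]₁ on g satisfies: for each extremal z there is λ_z ∈ F* with [x,z]₁ = λ_z[x,z] whenever [x,z] ≠ 0, and [x,z]₁ = 0 whenever [x,z] = 0. Then there is a single λ ∈ F* with [x,y₁]₁ = λ[x,y₁] and [x,y₂]₁ = λ[x,y₂]. -/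
/-- Let `x` be extremal and `y₁, y₂` extremal elements spanning a line all
of whose nonzero elements are extremal. If a second Lie bracket `Br` agrees with `[x,·]`
up to a nonzero scalar on each extremal `z` with `[x,z] ≠ 0`, and vanishes on extremal `z`
with `[x,z] = 0`, then a single scalar `λ` works for both `y₁` and `y₂`. -/
theorem constant_scalar_on_line {F : Type*} [Field F] {L : Type*} [LieRing L]
    [LieAlgebra F L] (hchar : (2 : F) ≠ 0)
    (x y₁ y₂ : L)
    (hx : IsExtremal F x) (hy₁ : IsExtremal F y₁) (hy₂ : IsExtremal F y₂)
    (hli : LinearIndependent F ![y₁, y₂]) (hcomm : ⁅y₁, y₂⁆ = 0)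
    (hline : ∀ a b : F, a • y₁ + b • y₂ ≠ 0 → IsExtremal F (a • y₁ + b • y₂))
    (Br : L →ₗ[F] L →ₗ[F] L)
    (halt : ∀ z : L, Br z z = 0)
    (hjac : ∀ a b c : L, Br a (Br b c) + Br b (Br c a) + Br c (Br a b) = 0)
    (hscal : ∀ z : L, IsExtremal F z →
      (⁅x, z⁆ ≠ 0 → ∃ lam : F, lam ≠ 0 ∧ Br x z = lam • ⁅x, z⁆) ∧
      (⁅x, z⁆ = 0 → Br x z = 0)) :
    ∃ lam : F, lam ≠ 0 ∧ Br x y₁ = lam • ⁅x, y₁⁆ ∧ Br x y₂ = lam • ⁅x, y₂⁆ := by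
  have hpair : ∀ a b : F, a • y₁ + b • y₂ = 0 → a = 0 ∧ b = 0 :=
    LinearIndependent.pair_iff.mp hli
  by_cases h1 : ⁅x, y₁⁆ = 0
  · have hb1 : Br x y₁ = 0 := (hscal y₁ hy₁).2 h1
    by_cases h2 : ⁅x, y₂⁆ = 0
    · exact ⟨1, one_ne_zero, by simp [hb1, h1], by simp [(hscal y₂ hy₂).2 h2, h2]⟩
    · obtain ⟨l, hl0, hl⟩ := (hscal y₂ hy₂).1 h2
      exact ⟨l, hl0, by simp [hb1, h1], hl⟩
  · obtain ⟨l₁, hl₁0, hl₁⟩ := (hscal y₁ hy₁).1 h1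
    by_cases h2 : ⁅x, y₂⁆ = 0
    · exact ⟨l₁, hl₁0, hl₁, by simp [(hscal y₂ hy₂).2 h2, h2]⟩
    · obtain ⟨l₂, hl₂0, hl₂⟩ := (hscal y₂ hy₂).1 h2
      by_cases hdep : ∃ c : F, ⁅x, y₂⁆ = c • ⁅x, y₁⁆
      · obtain ⟨c, hc⟩ := hdep
        have hc0 : c ≠ 0 := by
          rintro rfl; simp only [zero_smul] at hc; exact h2 hc
        have hz0 : c • y₁ + (-1 : F) • y₂ ≠ 0 := by
          intro h; exact hc0 (hpair c (-1) h).1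
        have hext := hline c (-1) hz0
        have hbz : ⁅x, c • y₁ + (-1 : F) • y₂⁆ = 0 := by
          simp [lie_add, lie_smul, hc]
        have hBz : Br x (c • y₁ + (-1 : F) • y₂) = 0 := (hscal _ hext).2 hbz
        have hBzexp : (c * l₁ - c * l₂) • ⁅x, y₁⁆ = 0 := by
          have h0 : c • Br x y₁ + (-1 : F) • Br x y₂ = 0 := by
            simpa [map_add, map_smul] using hBz
          rw [hl₁, hl₂, hc] at h0
          linear_combination (norm := module) h0
        have hcoef : c * l₁ - c * l₂ = 0 := by
          rcases smul_eq_zero.mp hBzexp with h | h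
          · exact h
          · exact absurd h h1
        have hll : l₁ = l₂ := by
          have hc2 : c * (l₁ - l₂) = 0 := by ring_nf; linear_combination hcoef
          rcases mul_eq_zero.mp hc2 with h | h
          · exact absurd h hc0
          · exact sub_eq_zero.mp h
        exact ⟨l₁, hl₁0, hl₁, by rw [hll]; exact hl₂⟩
      · have hindep : ∀ a b : F, a • ⁅x, y₁⁆ + b • ⁅x, y₂⁆ = 0 → a = 0 ∧ b = 0 := by
          intro a b h
          by_cases hb : b = 0
          · subst hb
            simp only [zero_smul, add_zero] at h
            rcases smul_eq_zero.mp h with h | h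
            · exact ⟨h, rfl⟩
            · exact absurd h h1
          · exfalso
            apply hdep
            refine ⟨-a / b, ?_⟩
            have hb2 : b • ⁅x, y₂⁆ = -(a • ⁅x, y₁⁆) := by
              rw [eq_neg_iff_add_eq_zero, add_comm]; exact h
            calc ⁅x, y₂⁆ = b⁻¹ • (b • ⁅x, y₂⁆) := by
                  rw [smul_smul, inv_mul_cancel₀ hb, one_smul]
              _ = (-a / b) • ⁅x, y₁⁆ := by
                  rw [hb2, smul_neg, smul_smul, ← neg_smul]
                  congr 1
                  field_simp
        have h3ne : (1 : F) • y₁ + (1 : F) • y₂ ≠ 0 := fun h =>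
          one_ne_zero (hpair 1 1 h).1
        have hext3 := hline 1 1 h3ne
        have hb3 : ⁅x, (1 : F) • y₁ + (1 : F) • y₂⁆ = ⁅x, y₁⁆ + ⁅x, y₂⁆ := by
          simp [lie_add, lie_smul]
        have hb3ne : ⁅x, (1 : F) • y₁ + (1 : F) • y₂⁆ ≠ 0 := by
          rw [hb3]
          intro h
          have := (hindep 1 1 (by simpa using h)).1
          exact one_ne_zero this
        obtain ⟨l₃, hl₃0, hl₃⟩ := (hscal _ hext3).1 hb3ne
        have key : (l₁ - l₃) • ⁅x, y₁⁆ + (l₂ - l₃) • ⁅x, y₂⁆ = 0 := by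
          have hL : Br x ((1 : F) • y₁ + (1 : F) • y₂) = Br x y₁ + Br x y₂ := by
            simp [map_add, map_smul]
          rw [hL, hl₁, hl₂, hb3, smul_add] at hl₃
          linear_combination (norm := module) hl₃
        obtain ⟨ha, hb⟩ := hindep _ _ key
        have e1 : l₁ = l₃ := sub_eq_zero.mp ha
        have e2 : l₂ = l₃ := sub_eq_zero.mp hb
        exact ⟨l₁, hl₁0, hl₁, by rw [e1, ← e2]; exact hl₂⟩
end
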